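/- Let M be a lattice (free abelian group of finite rank), v ∈ M, n ≥ 1. Define n' as the positive generator of the subgroup {i ∈ ℤ : i·(v/n) ∈ M} of ℤ. If n' = n (i.e. (i/n)·v ∉ M for all 0 < i < n), then the inclusion of group algebras k[M] → k[M'] with M' = M + ℤ·(v/n) ⊂ M ⊗ ℚ satisfies the universal property of the n-th root of the unit χ^v: for every ring homomorphism g : k[M] → B and b ∈ B with b^n = g(χ^v), there is a unique extension g' : k[M'] → B with g'(χ^{v/n}) = b. -/

import Mathlib

/-- Let `M` be a lattice, `v ∈ M`, `n ≥ 1`, and let `M'` be the lattice `M + ℤ·(v/n)`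
(encoded abstractly: `ι : M →+ M'` injective, `w ∈ M'` with `n•w = ι v`, `M'` generated by
`ι(M)` and `w`). Assume `n' = n`, i.e. `i•(v/n) ∈ M` only when `n ∣ i`. Then the inclusion of
group algebras `k[M] → k[M']` satisfies the universal property of the `n`-th root of the unit
`χ^v`: for every ring homomorphism `g : k[M] → B` and `b ∈ B` with `bⁿ = g(χ^v)`, there is a
unique extension `g' : k[M'] → B` with `g'(χ^{v/n}) = b`. -/
theorem stmt_13 (k : Type*) [Field k]
    (M M' : Type*) [AddCommGroup M] [AddCommGroup M']
    [Module.Free ℤ M] [Module.Finite ℤ M]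
    (ι : M →+ M') (hι : Function.Injective ι)
    (v : M) (n : ℕ) (hn : 0 < n)
    (w : M') (hw : n • w = ι v)
    (hgen : AddSubgroup.closure (Set.range ι ∪ {w}) = ⊤)
    (hprim : ∀ i : ℤ, (∃ m : M, i • w = ι m) → (n : ℤ) ∣ i)
    (B : Type*) [CommRing B] (g : AddMonoidAlgebra k M →+* B)
    (b : B) (hb : b ^ n = g (AddMonoidAlgebra.single v 1)) :
    ∃! g' : AddMonoidAlgebra k M' →+* B,
      g'.comp (AddMonoidAlgebra.mapDomainRingHom k ι) = g ∧
        g' (AddMonoidAlgebra.single w 1) = b := by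
  classical
  -- units-valued homomorphism on M
  let gm : Multiplicative M →* B :=
    (g : AddMonoidAlgebra k M →* B).comp (AddMonoidAlgebra.of k M)
  let u : M →+ Additive Bˣ := MonoidHom.toAdditiveRight gm.toHomUnits
  have hu : ∀ m : M, ((Additive.toMul (u m) : Bˣ) : B) = g (AddMonoidAlgebra.single m 1) := by
    intro m
    simp [u, gm, AddMonoidAlgebra.of_apply]
  -- b is a unit
  have hbu : IsUnit b := by
    have h1 : IsUnit (b ^ n) := by
      rw [hb, ← hu v]; exact (Additive.toMul (u v)).isUnit
    exact (isUnit_pow_iff hn.ne').mp h1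
  let bu : Bˣ := hbu.unit
  have hbu' : (bu : B) = b := hbu.unit_spec
  have hbun : (n : ℕ) • (Additive.ofMul bu) = u v := by
    have : bu ^ n = Additive.toMul (u v) := by
      apply Units.ext
      rw [Units.val_pow_eq_pow_val, hbu', hb, hu v]
    rw [← ofMul_pow, this, ofMul_toMul]
  -- the surjection π : M × ℤ → M' and the compatible map ψ to units
  let π : M × ℤ →+ M' := ι.coprod ((zmultiplesHom M') w)
  let ψ : M × ℤ →+ Additive Bˣ := u.coprod ((zmultiplesHom (Additive Bˣ)) (Additive.ofMul bu))
  have hπ : ∀ p : M × ℤ, π p = ι p.1 + p.2 • w := fun p => rfl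
  have hψ : ∀ p : M × ℤ, ψ p = u p.1 + p.2 • (Additive.ofMul bu) := fun p => rfl
  have hπsurj : Function.Surjective π := by
    rw [← AddMonoidHom.range_eq_top, eq_top_iff, ← hgen, AddSubgroup.closure_le]
    rintro x (⟨m, rfl⟩ | rfl)
    · exact ⟨(m, 0), by simp [hπ]⟩
    · exact ⟨(0, 1), by simp [hπ]⟩
  have hker : ∀ p ∈ π.ker, ψ p = 0 := by
    rintro ⟨m, i⟩ hp
    have hp0 : ι m + i • w = 0 := hp
    obtain ⟨j, rfl⟩ := hprim i ⟨-m, by rw [map_neg]; exact (neg_eq_of_add_eq_zero_right hp0).symm⟩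
    have hiw : ((n : ℤ) * j) • w = ι (j • v) := by
      rw [mul_comm, mul_smul, natCast_zsmul, hw, map_zsmul]
    have hm : m = -(j • v) := by
      apply hι
      rw [map_neg, ← hiw]
      exact eq_neg_of_add_eq_zero_left hp0
    have hnj : ((n : ℤ) * j) • (Additive.ofMul bu) = j • u v := by
      rw [mul_comm, mul_smul, natCast_zsmul, hbun]
    rw [hψ, hm, map_neg, map_zsmul, hnj]
    simp
  -- factor ψ through M'
  let φ0 : (M × ℤ) ⧸ π.ker →+ Additive Bˣ := QuotientAddGroup.lift π.ker ψ hker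
  let e : ((M × ℤ) ⧸ π.ker) ≃+ M' := QuotientAddGroup.quotientKerEquivOfSurjective π hπsurj
  let φ : M' →+ Additive Bˣ := φ0.comp e.symm.toAddMonoidHom
  have hφπ : ∀ p : M × ℤ, φ (π p) = ψ p := by
    intro p
    have he : e ((QuotientAddGroup.mk p : (M × ℤ) ⧸ π.ker)) = π p := rfl
    have : e.symm (π p) = (QuotientAddGroup.mk p : (M × ℤ) ⧸ π.ker) := by
      rw [← he, AddEquiv.symm_apply_apply]
    show φ0 (e.symm (π p)) = ψ p
    rw [this]
    rfl
  -- the ring hom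
  let F : Multiplicative M' →* B := (Units.coeHom B).comp (AddMonoidHom.toMultiplicativeLeft φ)
  let g' : AddMonoidAlgebra k M' →+* B :=
    AddMonoidAlgebra.liftNCRingHom (g.comp AddMonoidAlgebra.singleZeroRingHom) F
      (fun _ _ => Commute.all _ _)
  have hg's : ∀ (a : M') (r : k),
      g' (AddMonoidAlgebra.single a r) = g (AddMonoidAlgebra.single 0 r) * F (Multiplicative.ofAdd a) := by
    intro a r
    simp [g', AddMonoidAlgebra.liftNCRingHom, AddMonoidAlgebra.singleZeroRingHom]
  have hFι : ∀ m : M, F (Multiplicative.ofAdd (ι m)) = g (AddMonoidAlgebra.single m 1) := by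
    intro m
    have h1 : φ (ι m) = u m := by
      have := hφπ (m, 0)
      simpa [hπ, hψ] using this
    show ((Additive.toMul (φ (ι m)) : Bˣ) : B) = _
    rw [h1, hu]
  have hFw : F (Multiplicative.ofAdd w) = b := by
    have h1 : φ w = Additive.ofMul bu := by
      have := hφπ (0, 1)
      simpa [hπ, hψ] using this
    show ((Additive.toMul (φ w) : Bˣ) : B) = b
    rw [h1, toMul_ofMul, hbu']
  have honeM : (AddMonoidAlgebra.single (0 : M) (1 : k)) = 1 := rfl
  have hone : (AddMonoidAlgebra.single (0 : M') (1 : k)) = 1 := rfl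
  have hcomp : g'.comp (AddMonoidAlgebra.mapDomainRingHom k ι) = g := by
    apply AddMonoidAlgebra.ringHom_ext
    · intro r
      have : (AddMonoidAlgebra.mapDomainRingHom k ι) (AddMonoidAlgebra.single (0 : M) r)
          = AddMonoidAlgebra.single (0 : M') r := by
        simp [AddMonoidAlgebra.mapDomainRingHom_apply, Finsupp.mapDomain_single]
      rw [RingHom.comp_apply, this, hg's]
      simp
    · intro a
      have : (AddMonoidAlgebra.mapDomainRingHom k ι) (AddMonoidAlgebra.single a (1 : k))
          = AddMonoidAlgebra.single (ι a) (1 : k) := by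
        simp [AddMonoidAlgebra.mapDomainRingHom_apply, Finsupp.mapDomain_single]
      rw [RingHom.comp_apply, this, hg's, hFι, honeM, map_one, one_mul]
  have hwval : g' (AddMonoidAlgebra.single w 1) = b := by
    rw [hg's, hFw, honeM, map_one, one_mul]
  refine ⟨g', ⟨hcomp, hwval⟩, ?_⟩
  rintro g'' ⟨hc, hwv⟩
  -- units of singles
  have hsmul : ∀ (f : AddMonoidAlgebra k M' →+* B) (a : M'),
      f (AddMonoidAlgebra.single a 1) * f (AddMonoidAlgebra.single (-a) 1) = 1 := by
    intro f a
    rw [← map_mul, AddMonoidAlgebra.single_mul_single, add_neg_cancel, one_mul, hone, map_one]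
  have hsingles : ∀ a : M',
      g'' (AddMonoidAlgebra.single a 1) = g' (AddMonoidAlgebra.single a 1) := by
    intro a
    have ha : a ∈ AddSubgroup.closure (Set.range ι ∪ {w}) := by
      rw [hgen]; exact AddSubgroup.mem_top a
    induction ha using AddSubgroup.closure_induction with
    | mem x hx =>
      rcases hx with ⟨m, rfl⟩ | rfl
      · have h1 := congrArg (fun h => h (AddMonoidAlgebra.single m (1:k))) (hc.trans hcomp.symm)
        simpa [AddMonoidAlgebra.mapDomainRingHom_apply, Finsupp.mapDomain_single] using h1
      · rw [hwv, hwval]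
    | zero => rw [hone, map_one, map_one]
    | add x y _ _ hx hy =>
      rw [← one_mul (1:k), ← AddMonoidAlgebra.single_mul_single, map_mul, map_mul, hx, hy]
    | neg x _ hx =>
      have h1 := hsmul g'' x
      have h2 := hsmul g' x
      rw [hx] at h1
      calc g'' (AddMonoidAlgebra.single (-x) 1)
          = g'' (AddMonoidAlgebra.single (-x) 1) *
            (g' (AddMonoidAlgebra.single x 1) * g' (AddMonoidAlgebra.single (-x) 1)) := by
            rw [h2, mul_one]
        _ = (g' (AddMonoidAlgebra.single x 1) * g'' (AddMonoidAlgebra.single (-x) 1)) *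
            g' (AddMonoidAlgebra.single (-x) 1) := by ring
        _ = g' (AddMonoidAlgebra.single (-x) 1) := by rw [h1, one_mul]
  apply AddMonoidAlgebra.ringHom_ext
  · intro r
    have hmap : (AddMonoidAlgebra.mapDomainRingHom k ι) (AddMonoidAlgebra.single (0 : M) r)
        = AddMonoidAlgebra.single (0 : M') r := by
      simp [AddMonoidAlgebra.mapDomainRingHom_apply, Finsupp.mapDomain_single]
    have h1 := congrArg (fun h => h (AddMonoidAlgebra.single (0:M) r)) (hc.trans hcomp.symm)
    simpa [hmap] using h1
  · exact hsingles
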